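/- (Structured block inverse, Lemma 6.3 of the paper) Let F, G00 be m×m, G01 be m×n, G10 be n×m, G11 be n×n real matrices, with F invertible and G = [[G00, G01],[G10, G11]] invertible with inverse H = [[H00, H01],[H10, H11]]. Let P0 = I − (1/d)J and P1 = (1/d)J be the d×d projections, and 𝟙 the d×1 all-ones vector. Then the matrix M = [[F ⊗ P0 + G00 ⊗ P1, G01 ⊗ 𝟙],[G10 ⊗ 𝟙ᵀ, d·G11]] is invertible with inverse [[F⁻¹ ⊗ P0 + H00 ⊗ P1, (1/d)H01 ⊗ 𝟙],[(1/d)H10 ⊗ 𝟙ᵀ, (1/d)H11]]. -/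

import Mathlib

open Matrix
open scoped Kronecker

/-- The d×d all-ones matrix. -/
noncomputable def Jmat (d : ℕ) : Matrix (Fin d) (Fin d) ℝ := Matrix.of fun _ _ => 1

/-- P0 = I - (1/d)·J. -/
noncomputable def P0 (d : ℕ) : Matrix (Fin d) (Fin d) ℝ := 1 - ((d : ℝ)⁻¹) • Jmat d

/-- P1 = (1/d)·J. -/
noncomputable def P1 (d : ℕ) : Matrix (Fin d) (Fin d) ℝ := ((d : ℝ)⁻¹) • Jmat d

/-- `X ⊗ 𝟙`, the Kronecker product of `X` with the `d`-dimensional all-ones column vector. -/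
noncomputable def kronOnesCol (d : ℕ) {m n : ℕ} (X : Matrix (Fin m) (Fin n) ℝ) :
    Matrix (Fin m × Fin d) (Fin n) ℝ := Matrix.of fun p j => X p.1 j

/-- `X ⊗ 𝟙ᵀ`, the Kronecker product of `X` with the `d`-dimensional all-ones row vector. -/
noncomputable def kronOnesRow (d : ℕ) {m n : ℕ} (X : Matrix (Fin m) (Fin n) ℝ) :
    Matrix (Fin m) (Fin n × Fin d) ℝ := Matrix.of fun i q => X i q.1

section helpers

variable {d m n p : ℕ}

lemma sum_P0 (hd : 0 < d) (k : Fin d) : ∑ l, P0 d k l = 0 := by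
  have : (d:ℝ) ≠ 0 := Nat.cast_ne_zero.mpr hd.ne'
  simp [P0, Jmat, one_apply, Finset.sum_sub_distrib, Finset.sum_ite_eq, this]

lemma sum_P1 (hd : 0 < d) (k : Fin d) : ∑ l, P1 d k l = 1 := by
  have : (d:ℝ) ≠ 0 := Nat.cast_ne_zero.mpr hd.ne'
  simp [P1, Jmat, this]

lemma sum_P0' (hd : 0 < d) (k : Fin d) : ∑ l, P0 d l k = 0 := by
  have : (d:ℝ) ≠ 0 := Nat.cast_ne_zero.mpr hd.ne'
  simp [P0, Jmat, one_apply, Finset.sum_sub_distrib, Finset.sum_ite_eq', this]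

lemma sum_P1' (hd : 0 < d) (k : Fin d) : ∑ l, P1 d l k = 1 := by
  have : (d:ℝ) ≠ 0 := Nat.cast_ne_zero.mpr hd.ne'
  simp [P1, Jmat, this]

lemma kronP0_mul_col (hd : 0 < d) (A : Matrix (Fin m) (Fin n) ℝ)
    (X : Matrix (Fin n) (Fin p) ℝ) :
    (A ⊗ₖ P0 d) * kronOnesCol d X = 0 := by
  ext ⟨i, k⟩ j
  simp only [mul_apply, kronOnesCol, kroneckerMap_apply, of_apply, Matrix.zero_apply,
    Fintype.sum_prod_type]
  have h : ∀ q : Fin n, ∑ l : Fin d, A i q * P0 d k l * X q j = 0 := by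
    intro q
    rw [← Finset.sum_mul, ← Finset.mul_sum, sum_P0 hd, mul_zero, zero_mul]
  simp [h]

lemma kronP1_mul_col (hd : 0 < d) (A : Matrix (Fin m) (Fin n) ℝ)
    (X : Matrix (Fin n) (Fin p) ℝ) :
    (A ⊗ₖ P1 d) * kronOnesCol d X = kronOnesCol d (A * X) := by
  ext ⟨i, k⟩ j
  simp only [mul_apply, kronOnesCol, kroneckerMap_apply, of_apply, Fintype.sum_prod_type]
  have h : ∀ q : Fin n, ∑ l : Fin d, A i q * P1 d k l * X q j = A i q * X q j := by
    intro q
    rw [← Finset.sum_mul, ← Finset.mul_sum, sum_P1 hd, mul_one]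
  simp [h]

lemma row_mul_kronP0 (hd : 0 < d) (X : Matrix (Fin m) (Fin n) ℝ)
    (A : Matrix (Fin n) (Fin p) ℝ) :
    kronOnesRow d X * (A ⊗ₖ P0 d) = 0 := by
  ext i ⟨j, k⟩
  simp only [mul_apply, kronOnesRow, kroneckerMap_apply, of_apply, Matrix.zero_apply,
    Fintype.sum_prod_type]
  have h : ∀ q : Fin n, ∑ l : Fin d, X i q * (A q j * P0 d l k) = 0 := by
    intro q
    rw [← Finset.mul_sum, ← Finset.mul_sum, sum_P0' hd, mul_zero, mul_zero]
  simp [h]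

lemma row_mul_kronP1 (hd : 0 < d) (X : Matrix (Fin m) (Fin n) ℝ)
    (A : Matrix (Fin n) (Fin p) ℝ) :
    kronOnesRow d X * (A ⊗ₖ P1 d) = kronOnesRow d (X * A) := by
  ext i ⟨j, k⟩
  simp only [mul_apply, kronOnesRow, kroneckerMap_apply, of_apply, Fintype.sum_prod_type]
  have h : ∀ q : Fin n, ∑ l : Fin d, X i q * (A q j * P1 d l k) = X i q * A q j := by
    intro q
    rw [← Finset.mul_sum, ← Finset.mul_sum, sum_P1' hd, mul_one]
  simp [h]

lemma col_mul_row (X : Matrix (Fin m) (Fin n) ℝ) (Y : Matrix (Fin n) (Fin p) ℝ) :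
    kronOnesCol d X * kronOnesRow d Y = (X * Y) ⊗ₖ Jmat d := by
  ext ⟨i, k⟩ ⟨j, l⟩
  simp [mul_apply, kronOnesCol, kronOnesRow, Jmat]

lemma row_mul_col (X : Matrix (Fin m) (Fin n) ℝ) (Y : Matrix (Fin n) (Fin p) ℝ) :
    kronOnesRow d X * kronOnesCol d Y = (d : ℝ) • (X * Y) := by
  ext i j
  simp only [mul_apply, kronOnesRow, kronOnesCol, of_apply, Matrix.smul_apply, smul_eq_mul,
    Fintype.sum_prod_type, Finset.sum_const, Finset.card_univ, Fintype.card_fin,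
    nsmul_eq_mul, Finset.mul_sum]

lemma mul_row (A : Matrix (Fin m) (Fin n) ℝ) (X : Matrix (Fin n) (Fin p) ℝ) :
    A * kronOnesRow d X = kronOnesRow d (A * X) := by
  ext i ⟨j, k⟩
  simp [mul_apply, kronOnesRow]

lemma col_mul (X : Matrix (Fin m) (Fin n) ℝ) (A : Matrix (Fin n) (Fin p) ℝ) :
    kronOnesCol d X * A = kronOnesCol d (X * A) := by
  ext ⟨i, k⟩ j
  simp [mul_apply, kronOnesCol]

lemma kronOnesCol_smul (c : ℝ) (X : Matrix (Fin m) (Fin n) ℝ) :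
    kronOnesCol d (c • X) = c • kronOnesCol d X := by
  ext ⟨i, k⟩ j; simp [kronOnesCol]

lemma kronOnesRow_smul (c : ℝ) (X : Matrix (Fin m) (Fin n) ℝ) :
    kronOnesRow d (c • X) = c • kronOnesRow d X := by
  ext i ⟨j, k⟩; simp [kronOnesRow]

lemma kronOnesCol_add (X Y : Matrix (Fin m) (Fin n) ℝ) :
    kronOnesCol d (X + Y) = kronOnesCol d X + kronOnesCol d Y := by
  ext ⟨i, k⟩ j; simp [kronOnesCol]

lemma kronOnesRow_add (X Y : Matrix (Fin m) (Fin n) ℝ) :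
    kronOnesRow d (X + Y) = kronOnesRow d X + kronOnesRow d Y := by
  ext i ⟨j, k⟩; simp [kronOnesRow]

lemma kronOnesCol_zero : kronOnesCol d (0 : Matrix (Fin m) (Fin n) ℝ) = 0 := by
  ext ⟨i, k⟩ j; simp [kronOnesCol]

lemma kronOnesRow_zero : kronOnesRow d (0 : Matrix (Fin m) (Fin n) ℝ) = 0 := by
  ext i ⟨j, k⟩; simp [kronOnesRow]

lemma P1_mul_P1 (hd : 0 < d) : P1 d * P1 d = P1 d := by
  have hne : (d:ℝ) ≠ 0 := Nat.cast_ne_zero.mpr hd.ne'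
  have hJJ : Jmat d * Jmat d = (d : ℝ) • Jmat d := by
    ext i j; simp [Jmat, mul_apply]
  simp only [P1, smul_mul_assoc, mul_smul_comm, hJJ, smul_smul]
  rw [inv_mul_cancel₀ hne, mul_one]

lemma P0_mul_P0 (hd : 0 < d) : P0 d * P0 d = P0 d := by
  have h : P0 d = 1 - P1 d := rfl
  rw [h, sub_mul, mul_sub, mul_sub, P1_mul_P1 hd, one_mul, one_mul, mul_one]
  abel

lemma P0_mul_P1 (hd : 0 < d) : P0 d * P1 d = 0 := by
  have h : P0 d = 1 - P1 d := rfl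
  rw [h, sub_mul, one_mul, P1_mul_P1 hd, sub_self]

lemma P1_mul_P0 (hd : 0 < d) : P1 d * P0 d = 0 := by
  have h : P0 d = 1 - P1 d := rfl
  rw [h, mul_sub, mul_one, P1_mul_P1 hd, sub_self]

lemma P0_add_P1 : P0 d + P1 d = 1 := by simp [P0, P1]

end helpers

theorem stmt_17 (d m n : ℕ) (hd : 0 < d)
    (F G00 : Matrix (Fin m) (Fin m) ℝ)
    (G01 : Matrix (Fin m) (Fin n) ℝ) (G10 : Matrix (Fin n) (Fin m) ℝ)
    (G11 : Matrix (Fin n) (Fin n) ℝ)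
    (H00 : Matrix (Fin m) (Fin m) ℝ)
    (H01 : Matrix (Fin m) (Fin n) ℝ) (H10 : Matrix (Fin n) (Fin m) ℝ)
    (H11 : Matrix (Fin n) (Fin n) ℝ)
    (hF : IsUnit F)
    (hGH : fromBlocks G00 G01 G10 G11 * fromBlocks H00 H01 H10 H11 = 1)
    (hHG : fromBlocks H00 H01 H10 H11 * fromBlocks G00 G01 G10 G11 = 1)
    (M N : Matrix ((Fin m × Fin d) ⊕ Fin n) ((Fin m × Fin d) ⊕ Fin n) ℝ)
    (hM : M = fromBlocks (F ⊗ₖ P0 d + G00 ⊗ₖ P1 d) (kronOnesCol d G01)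
      (kronOnesRow d G10) ((d : ℝ) • G11))
    (hN : N = fromBlocks (F⁻¹ ⊗ₖ P0 d + H00 ⊗ₖ P1 d) (kronOnesCol d ((d : ℝ)⁻¹ • H01))
      (kronOnesRow d ((d : ℝ)⁻¹ • H10)) ((d : ℝ)⁻¹ • H11)) :
    M * N = 1 ∧ N * M = 1 := by
  have hne : (d:ℝ) ≠ 0 := Nat.cast_ne_zero.mpr hd.ne'
  have hdF : IsUnit F.det := (Matrix.isUnit_iff_isUnit_det F).mp hF
  have hFF : F * F⁻¹ = 1 := Matrix.mul_nonsing_inv F hdF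
  have hFF' : F⁻¹ * F = 1 := Matrix.nonsing_inv_mul F hdF
  rw [fromBlocks_multiply, ← fromBlocks_one] at hGH hHG
  have e00 : G00 * H00 + G01 * H10 = 1 := congrArg Matrix.toBlocks₁₁ hGH
  have e01 : G00 * H01 + G01 * H11 = 0 := congrArg Matrix.toBlocks₁₂ hGH
  have e10 : G10 * H00 + G11 * H10 = 0 := congrArg Matrix.toBlocks₂₁ hGH
  have e11 : G10 * H01 + G11 * H11 = 1 := congrArg Matrix.toBlocks₂₂ hGH
  have f00 : H00 * G00 + H01 * G10 = 1 := congrArg Matrix.toBlocks₁₁ hHG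
  have f01 : H00 * G01 + H01 * G11 = 0 := congrArg Matrix.toBlocks₁₂ hHG
  have f10 : H10 * G00 + H11 * G10 = 0 := congrArg Matrix.toBlocks₂₁ hHG
  have f11 : H10 * G01 + H11 * G11 = 1 := congrArg Matrix.toBlocks₂₂ hHG
  subst hM hN
  have b00 : (F ⊗ₖ P0 d + G00 ⊗ₖ P1 d) * (F⁻¹ ⊗ₖ P0 d + H00 ⊗ₖ P1 d) +
      kronOnesCol d G01 * kronOnesRow d ((d:ℝ)⁻¹ • H10) = 1 := by
    rw [Matrix.add_mul, Matrix.mul_add, Matrix.mul_add, ← mul_kronecker_mul, ← mul_kronecker_mul,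
      ← mul_kronecker_mul, ← mul_kronecker_mul, P0_mul_P0 hd, P0_mul_P1 hd,
      P1_mul_P0 hd, P1_mul_P1 hd, hFF, kronOnesRow_smul, Matrix.mul_smul, col_mul_row]
    have hJ : (d:ℝ)⁻¹ • ((G01 * H10) ⊗ₖ Jmat d) = (G01 * H10) ⊗ₖ P1 d := by
      rw [P1, Matrix.kronecker_smul]
    rw [hJ]
    simp only [kronecker_zero, add_zero, zero_add]
    rw [add_assoc, ← add_kronecker, e00, ← kronecker_add, P0_add_P1, one_kronecker_one]
  have b01 : (F ⊗ₖ P0 d + G00 ⊗ₖ P1 d) * kronOnesCol d ((d:ℝ)⁻¹ • H01) +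
      kronOnesCol d G01 * ((d:ℝ)⁻¹ • H11) = 0 := by
    rw [Matrix.add_mul, kronP0_mul_col hd, zero_add, kronP1_mul_col hd, col_mul,
      ← kronOnesCol_add]
    have h : G00 * ((d:ℝ)⁻¹ • H01) + G01 * ((d:ℝ)⁻¹ • H11)
        = (d:ℝ)⁻¹ • (G00 * H01 + G01 * H11) := by
      rw [Matrix.mul_smul, Matrix.mul_smul, smul_add]
    rw [h, e01, smul_zero, kronOnesCol_zero]
  have b10 : kronOnesRow d G10 * (F⁻¹ ⊗ₖ P0 d + H00 ⊗ₖ P1 d) +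
      ((d:ℝ) • G11) * kronOnesRow d ((d:ℝ)⁻¹ • H10) = 0 := by
    rw [Matrix.mul_add, row_mul_kronP0 hd, zero_add, row_mul_kronP1 hd, mul_row,
      ← kronOnesRow_add]
    have h : G10 * H00 + (d:ℝ) • G11 * ((d:ℝ)⁻¹ • H10)
        = G10 * H00 + G11 * H10 := by
      rw [Matrix.smul_mul, Matrix.mul_smul, smul_smul, mul_inv_cancel₀ hne, one_smul]
    rw [h, e10, kronOnesRow_zero]
  have b11 : kronOnesRow d G10 * kronOnesCol d ((d:ℝ)⁻¹ • H01) +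
      ((d:ℝ) • G11) * ((d:ℝ)⁻¹ • H11) = 1 := by
    rw [row_mul_col]
    have h1 : (d:ℝ) • (G10 * ((d:ℝ)⁻¹ • H01)) = G10 * H01 := by
      rw [Matrix.mul_smul, smul_smul, mul_inv_cancel₀ hne, one_smul]
    have h2 : (d:ℝ) • G11 * ((d:ℝ)⁻¹ • H11) = G11 * H11 := by
      rw [Matrix.smul_mul, Matrix.mul_smul, smul_smul, mul_inv_cancel₀ hne, one_smul]
    rw [h1, h2, e11]
  have c00 : (F⁻¹ ⊗ₖ P0 d + H00 ⊗ₖ P1 d) * (F ⊗ₖ P0 d + G00 ⊗ₖ P1 d) +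
      kronOnesCol d ((d:ℝ)⁻¹ • H01) * kronOnesRow d G10 = 1 := by
    rw [Matrix.add_mul, Matrix.mul_add, Matrix.mul_add, ← mul_kronecker_mul, ← mul_kronecker_mul,
      ← mul_kronecker_mul, ← mul_kronecker_mul, P0_mul_P0 hd, P0_mul_P1 hd,
      P1_mul_P0 hd, P1_mul_P1 hd, hFF', kronOnesCol_smul, Matrix.smul_mul, col_mul_row]
    have hJ : (d:ℝ)⁻¹ • ((H01 * G10) ⊗ₖ Jmat d) = (H01 * G10) ⊗ₖ P1 d := by
      rw [P1, Matrix.kronecker_smul]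
    rw [hJ]
    simp only [kronecker_zero, add_zero, zero_add]
    rw [add_assoc, ← add_kronecker, f00, ← kronecker_add, P0_add_P1, one_kronecker_one]
  have c01 : (F⁻¹ ⊗ₖ P0 d + H00 ⊗ₖ P1 d) * kronOnesCol d G01 +
      kronOnesCol d ((d:ℝ)⁻¹ • H01) * ((d:ℝ) • G11) = 0 := by
    rw [Matrix.add_mul, kronP0_mul_col hd, zero_add, kronP1_mul_col hd, col_mul,
      ← kronOnesCol_add]
    have h : H00 * G01 + (d:ℝ)⁻¹ • H01 * ((d:ℝ) • G11)
        = H00 * G01 + H01 * G11 := by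
      rw [Matrix.smul_mul, Matrix.mul_smul, smul_smul, inv_mul_cancel₀ hne, one_smul]
    rw [h, f01, kronOnesCol_zero]
  have c10 : kronOnesRow d ((d:ℝ)⁻¹ • H10) * (F ⊗ₖ P0 d + G00 ⊗ₖ P1 d) +
      ((d:ℝ)⁻¹ • H11) * kronOnesRow d G10 = 0 := by
    rw [Matrix.mul_add, row_mul_kronP0 hd, zero_add, row_mul_kronP1 hd, mul_row,
      ← kronOnesRow_add]
    have h : (d:ℝ)⁻¹ • H10 * G00 + (d:ℝ)⁻¹ • H11 * G10
        = (d:ℝ)⁻¹ • (H10 * G00 + H11 * G10) := by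
      rw [Matrix.smul_mul, Matrix.smul_mul, smul_add]
    rw [h, f10, smul_zero, kronOnesRow_zero]
  have c11 : kronOnesRow d ((d:ℝ)⁻¹ • H10) * kronOnesCol d G01 +
      ((d:ℝ)⁻¹ • H11) * ((d:ℝ) • G11) = 1 := by
    rw [row_mul_col]
    have h1 : (d:ℝ) • ((d:ℝ)⁻¹ • H10 * G01) = H10 * G01 := by
      rw [Matrix.smul_mul, smul_smul, mul_inv_cancel₀ hne, one_smul]
    have h2 : (d:ℝ)⁻¹ • H11 * ((d:ℝ) • G11) = H11 * G11 := by
      rw [Matrix.smul_mul, Matrix.mul_smul, smul_smul, inv_mul_cancel₀ hne, one_smul]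
    rw [h1, h2, f11]
  constructor
  · rw [fromBlocks_multiply, b00, b01, b10, b11, ← fromBlocks_one]
  · rw [fromBlocks_multiply, c00, c01, c10, c11, ← fromBlocks_one]
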